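/- Let g : ℝ → ℝ be a derivator with continuous part g^C, defined by g^C(t) = g(t) - g^B(t) where g^B(t) = ∑_{s ∈ [a,t) ∩ D_g} Δ⁺g(s) for t > a (and the corresponding negative sum for t ≤ a). Then every set E that is measurable for the Lebesgue–Stieltjes measure μ_g is also measurable for the Lebesgue–Stieltjes measure μ_{g^C}; i.e., the σ-algebra M_g is contained in M_{g^C}. -/

import Mathlib

open MeasureTheory Set Function Filter Topology

noncomputable section

/-- A derivator: a non-decreasing, left-continuous function. -/
def IsDerivator (g : ℝ → ℝ) : Prop :=
  Monotone g ∧ ∀ x : ℝ, ContinuousWithinAt g (Set.Iic x) x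

/-- The jump `Δ⁺g(t) = g(t⁺) - g(t)`. -/
def jumpG (g : ℝ → ℝ) (t : ℝ) : ℝ := Function.rightLim g t - g t

/-- The set of discontinuity points of `g`. -/
def Dg (g : ℝ → ℝ) : Set ℝ := {t | 0 < jumpG g t}

/-- The jump part `g^B` of `g`, with base point `a`. -/
def jumpPart (g : ℝ → ℝ) (a : ℝ) : ℝ → ℝ := fun t =>
  if a < t then ∑' s : (Set.Ico a t : Set ℝ), jumpG g s
  else - ∑' s : (Set.Ico t a : Set ℝ), jumpG g s

/-- The continuous part `g^C = g - g^B` of `g`, with base point `a`. -/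
def contPart (g : ℝ → ℝ) (a : ℝ) : ℝ → ℝ := fun t => g t - jumpPart g a t

/-- The Lebesgue–Stieltjes outer measure associated to `g`, generated by
`μ_g([c,d)) = g d - g c` on half-open intervals. -/
def stieltjesOuter (g : ℝ → ℝ) : OuterMeasure ℝ :=
  OuterMeasure.ofFunction
    (fun s => ⨅ (p : ℝ × ℝ) (_ : s = Set.Ico p.1 p.2), ENNReal.ofReal (g p.2 - g p.1))
    (by
      refine le_antisymm ?_ zero_le
      refine le_trans (iInf₂_le ((0 : ℝ), (0 : ℝ)) ?_) ?_ <;> simp)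

open Classical in
/-- The Lebesgue–Stieltjes measure of a non-decreasing left-continuous `g`: the measure with
`μ_g([c,d)) = g d - g c`.  It is realised as the Stieltjes measure of the right-continuous
modification of `g`. -/
def stieltjesMeasure (g : ℝ → ℝ) : Measure ℝ :=
  if h : Monotone g then h.stieltjesFunction.measure else 0

variable {E : Type*} [NormedAddCommGroup E]

/-- `f` is `g`-continuous at `t` relative to the set `s`. -/
def GContWithin (g : ℝ → ℝ) (f : ℝ → E) (s : Set ℝ) (t : ℝ) : Prop :=
  ∀ ε > 0, ∃ δ > 0, ∀ u ∈ s, |g t - g u| < δ → ‖f t - f u‖ < ε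

/-- `f` is `g`-continuous on the set `s`. -/
def GContOn (g : ℝ → ℝ) (f : ℝ → E) (s : Set ℝ) : Prop := ∀ t ∈ s, GContWithin g f s t

/-- `t` lies in `C_g`: `g` is constant in a neighbourhood of `t`. -/
def InCg (g : ℝ → ℝ) (t : ℝ) : Prop :=
  ∃ ε > 0, ∀ u ∈ Set.Ioo (t - ε) (t + ε), ∀ v ∈ Set.Ioo (t - ε) (t + ε), g u = g v

/-- `t ∈ N_g⁻`: `t` is the left endpoint of a constancy interval of `g`, `t ∉ D_g`. -/
def InNgMinus (g : ℝ → ℝ) (t : ℝ) : Prop :=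
  t ∉ Dg g ∧ ¬ InCg g t ∧
    ∃ ε > 0, ∀ u ∈ Set.Ioo t (t + ε), ∀ v ∈ Set.Ioo t (t + ε), g u = g v

/-- `t ∈ N_g⁺`: `t` is the right endpoint of a constancy interval of `g`, `t ∉ D_g`. -/
def InNgPlus (g : ℝ → ℝ) (t : ℝ) : Prop :=
  t ∉ Dg g ∧ ¬ InCg g t ∧
    ∃ ε > 0, ∀ u ∈ Set.Ioo (t - ε) t, ∀ v ∈ Set.Ioo (t - ε) t, g u = g v

/-- The right endpoint `bₙ` of the constancy component of `g` containing `t`. -/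
def compEnd (g : ℝ → ℝ) (t : ℝ) : ℝ := sSup {u | ∀ v ∈ Set.Icc t u, g v = g t}

open Classical in
/-- The Stieltjes `g`-derivative of `f : s → E` at `t`, in the extended sense: at points of `D_g`
one takes the right-hand limit of the difference quotient, at points of `C_g` the right-hand
limit at the right endpoint of the constancy component, and elsewhere the limit of the difference
quotient restricted to points where `g` differs from `g t` (this covers the points of `N_g`). -/
def HasGDerivWithinAt [NormedSpace ℝ E] (g : ℝ → ℝ) (f : ℝ → E) (s : Set ℝ) (t : ℝ) (L : E) :
    Prop :=
  if t ∈ Dg g then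
    Tendsto (fun u => (g u - g t)⁻¹ • (f u - f t)) (𝓝[s ∩ Set.Ioi t] t) (𝓝 L)
  else if InCg g t then
    Tendsto (fun u => (g u - g (compEnd g t))⁻¹ • (f u - f (compEnd g t)))
      (𝓝[s ∩ Set.Ioi (compEnd g t)] (compEnd g t)) (𝓝 L)
  else
    Tendsto (fun u => (g u - g t)⁻¹ • (f u - f t)) (𝓝[s ∩ {u | g u ≠ g t}] t) (𝓝 L)

/-- `v` is `g`-absolutely continuous on `[0,T]`: it is an indefinite `μ_g`-integral. -/
def ACgOn (g : ℝ → ℝ) (v : ℝ → ℂ) (T : ℝ) : Prop :=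
  ∃ h : ℝ → ℂ, MeasureTheory.IntegrableOn h (Set.Ico 0 T) (stieltjesMeasure g) ∧
    ∀ t ∈ Set.Icc 0 T, v t = v 0 + ∫ s in Set.Ico 0 t, h s ∂(stieltjesMeasure g)

end

section StieltjesAux

open MeasureTheory Set

variable {g : ℝ → ℝ}

lemma jumpG_nonneg (hg : Monotone g) (s : ℝ) : 0 ≤ jumpG g s :=
  sub_nonneg.2 (hg.le_rightLim le_rfl)

lemma sum_jumpG_le (hg : Monotone g) (F : Finset ℝ) :
    ∀ c d : ℝ, c ≤ d → ↑F ⊆ Set.Ico c d → ∑ s ∈ F, jumpG g s ≤ g d - g c := by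
  classical
  induction F using Finset.induction_on_max with
  | empty =>
    intro c d hcd _
    simpa using sub_nonneg.2 (hg hcd)
  | insert a s ha ih =>
    intro c d hcd hsub
    have haIco : a ∈ Set.Ico c d := hsub (by simp)
    have hs : ↑s ⊆ Set.Ico c a := by
      intro x hx
      have hx' : x ∈ Set.Ico c d := hsub (by simp [hx])
      exact ⟨hx'.1, ha x hx⟩
    have hamem : a ∉ s := fun h => lt_irrefl a (ha a h)
    rw [Finset.sum_insert hamem]
    have h1 : ∑ t ∈ s, jumpG g t ≤ g a - g c := ih c a haIco.1 hs
    have h2 : jumpG g a ≤ g d - g a :=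
      sub_le_sub (hg.rightLim_le haIco.2) le_rfl
    linarith

lemma finsetsum_jumpG_le (hg : Monotone g) {c d : ℝ} (hcd : c ≤ d)
    (u : Finset (Set.Ico c d : Set ℝ)) : ∑ s ∈ u, jumpG g ↑s ≤ g d - g c := by
  classical
  have h := sum_jumpG_le hg (u.map (Function.Embedding.subtype _)) c d hcd ?_
  · simpa [Finset.sum_map] using h
  · intro x hx
    simp only [Finset.coe_map, Set.mem_image, Function.Embedding.coe_subtype] at hx
    obtain ⟨y, -, rfl⟩ := hx
    exact y.2

lemma summable_jumpG (hg : Monotone g) (c d : ℝ) :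
    Summable (fun s : (Set.Ico c d : Set ℝ) => jumpG g ↑s) := by
  rcases le_total c d with hcd | hdc
  · exact summable_of_sum_le (fun s => jumpG_nonneg hg _)
      (fun u => finsetsum_jumpG_le hg hcd u)
  · have he : Set.Ico c d = (∅ : Set ℝ) := Set.Ico_eq_empty (not_lt.2 hdc)
    haveI : IsEmpty (Set.Ico c d : Set ℝ) := by rw [he]; infer_instance
    exact summable_empty

lemma tsum_jumpG_le (hg : Monotone g) {c d : ℝ} (hcd : c ≤ d) :
    ∑' s : (Set.Ico c d : Set ℝ), jumpG g ↑s ≤ g d - g c :=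
  Summable.tsum_le_of_sum_le (summable_jumpG hg c d) (fun u => finsetsum_jumpG_le hg hcd u)

lemma tsum_jumpG_split (hg : Monotone g) {x y z : ℝ} (h1 : x ≤ y) (h2 : y ≤ z) :
    ∑' s : (Set.Ico x z : Set ℝ), jumpG g ↑s
      = (∑' s : (Set.Ico x y : Set ℝ), jumpG g ↑s)
        + ∑' s : (Set.Ico y z : Set ℝ), jumpG g ↑s := by
  rw [← Set.Ico_union_Ico_eq_Ico h1 h2]
  exact Summable.tsum_union_disjoint Set.Ico_disjoint_Ico_same
    (summable_jumpG hg x y) (summable_jumpG hg y z)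

lemma tsum_jumpG_empty {c d : ℝ} (h : d ≤ c) :
    ∑' s : (Set.Ico c d : Set ℝ), jumpG g ↑s = 0 := by
  haveI : IsEmpty (Set.Ico c d : Set ℝ) := by
    rw [Set.Ico_eq_empty (not_lt.2 h)]; infer_instance
  exact tsum_empty

lemma jumpPart_eq (g : ℝ → ℝ) (a t : ℝ) :
    jumpPart g a t = (∑' s : (Set.Ico a t : Set ℝ), jumpG g ↑s)
      - ∑' s : (Set.Ico t a : Set ℝ), jumpG g ↑s := by
  unfold jumpPart
  split_ifs with h
  · rw [tsum_jumpG_empty h.le]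
    ring
  · rw [tsum_jumpG_empty (not_lt.1 h)]
    ring

lemma jumpPart_sub (hg : Monotone g) (a : ℝ) {c d : ℝ} (hcd : c ≤ d) :
    jumpPart g a d - jumpPart g a c = ∑' s : (Set.Ico c d : Set ℝ), jumpG g ↑s := by
  rw [jumpPart_eq, jumpPart_eq]
  rcases le_total a c with hac | hca
  · rw [tsum_jumpG_empty (hac.trans hcd), tsum_jumpG_empty hac,
      tsum_jumpG_split hg hac hcd]
    ring
  · rcases le_total d a with hda | had
    · rw [tsum_jumpG_empty (hcd.trans hda), tsum_jumpG_empty hda,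
        tsum_jumpG_split hg hcd hda]
      ring
    · rw [tsum_jumpG_empty had, tsum_jumpG_empty hca,
        tsum_jumpG_split hg hca had]
      ring

lemma jumpPart_mono (hg : Monotone g) (a : ℝ) : Monotone (jumpPart g a) := by
  intro c d hcd
  have h := jumpPart_sub hg a hcd
  have h2 : (0:ℝ) ≤ ∑' s : (Set.Ico c d : Set ℝ), jumpG g ↑s :=
    tsum_nonneg (fun s => jumpG_nonneg hg _)
  linarith

lemma contPart_mono (hg : Monotone g) (a : ℝ) : Monotone (contPart g a) := by
  intro c d hcd
  have h := jumpPart_sub hg a hcd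
  have h2 := tsum_jumpG_le hg hcd
  simp only [contPart]
  linarith

lemma stieltjesOuter_Ico_le (h : ℝ → ℝ) (c d : ℝ) :
    stieltjesOuter h (Set.Ico c d) ≤ ENNReal.ofReal (h d - h c) := by
  refine (MeasureTheory.OuterMeasure.ofFunction_le _).trans ?_
  exact iInf_le_of_le ((c, d) : ℝ × ℝ) (iInf_le _ rfl)

lemma isCaratheodory_Iio {h : ℝ → ℝ} (hh : Monotone h) (x : ℝ) :
    (stieltjesOuter h).IsCaratheodory (Set.Iio x) := by
  apply MeasureTheory.OuterMeasure.ofFunction_caratheodory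
  intro t
  refine le_iInf fun p => le_iInf fun hp => ?_
  subst hp
  have h1 : Set.Ico p.1 p.2 ∩ Set.Iio x = Set.Ico p.1 (min p.2 x) := by
    ext y; simp only [Set.mem_inter_iff, Set.mem_Ico, Set.mem_Iio, lt_min_iff]; tauto
  have h2 : Set.Ico p.1 p.2 \ Set.Iio x = Set.Ico (max p.1 x) p.2 := by
    ext y; simp only [Set.mem_diff, Set.mem_Ico, Set.mem_Iio, max_le_iff, not_lt]; tauto
  have b1 : (⨅ (q : ℝ × ℝ) (_ : Set.Ico p.1 p.2 ∩ Set.Iio x = Set.Ico q.1 q.2),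
      ENNReal.ofReal (h q.2 - h q.1)) ≤ ENNReal.ofReal (h (min p.2 x) - h p.1) :=
    iInf₂_le ((p.1, min p.2 x) : ℝ × ℝ) h1
  have b2 : (⨅ (q : ℝ × ℝ) (_ : Set.Ico p.1 p.2 \ Set.Iio x = Set.Ico q.1 q.2),
      ENNReal.ofReal (h q.2 - h q.1)) ≤ ENNReal.ofReal (h p.2 - h (max p.1 x)) :=
    iInf₂_le ((max p.1 x, p.2) : ℝ × ℝ) h2
  refine (add_le_add b1 b2).trans ?_
  rcases le_total x p.1 with hx1 | hx1
  · have e1 : ENNReal.ofReal (h (min p.2 x) - h p.1) = 0 :=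
      ENNReal.ofReal_eq_zero.2 (sub_nonpos.2 (hh ((min_le_right _ _).trans hx1)))
    rw [e1, zero_add, max_eq_left hx1]
  · rcases le_total p.2 x with hx2 | hx2
    · have e2 : ENNReal.ofReal (h p.2 - h (max p.1 x)) = 0 :=
        ENNReal.ofReal_eq_zero.2 (sub_nonpos.2 (hh (hx2.trans (le_max_right _ _))))
      rw [e2, add_zero, min_eq_left hx2]
    · rw [min_eq_right hx2, max_eq_right hx1,
        ← ENNReal.ofReal_add (sub_nonneg.2 (hh hx1)) (sub_nonneg.2 (hh hx2))]
      apply ENNReal.ofReal_le_ofReal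
      ring_nf
      exact le_rfl

lemma isCaratheodory_Ico {h : ℝ → ℝ} (hh : Monotone h) (c d : ℝ) :
    (stieltjesOuter h).IsCaratheodory (Set.Ico c d) := by
  have heq : Set.Ico c d = Set.Iio d \ Set.Iio c := by
    ext y; simp only [Set.mem_Ico, Set.mem_diff, Set.mem_Iio, not_lt]; tauto
  rw [heq]
  exact (stieltjesOuter h).isCaratheodory_diff (isCaratheodory_Iio hh d)
    (isCaratheodory_Iio hh c)

lemma stieltjesOuter_contPart_le (hg : Monotone g) (a : ℝ) (s : Set ℝ) :
    stieltjesOuter (contPart g a) s ≤ stieltjesOuter g s := by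
  refine MeasureTheory.OuterMeasure.le_ofFunction.2 (fun s => ?_) s
  refine le_iInf fun p => le_iInf fun hp => ?_
  subst hp
  refine (stieltjesOuter_Ico_le _ p.1 p.2).trans ?_
  rcases le_total p.1 p.2 with h12 | h21
  · apply ENNReal.ofReal_le_ofReal
    have h := jumpPart_mono hg a h12
    simp only [contPart]
    linarith
  · have h0 : ENNReal.ofReal (contPart g a p.2 - contPart g a p.1) = 0 :=
      ENNReal.ofReal_eq_zero.2 (sub_nonpos.2 (contPart_mono hg a h21))
    rw [h0]
    exact zero_le

lemma isCaratheodory_of_null {m : MeasureTheory.OuterMeasure ℝ} {s : Set ℝ} (h : m s = 0) :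
    m.IsCaratheodory s := by
  rw [MeasureTheory.OuterMeasure.isCaratheodory_iff_le']
  intro t
  have h1 : m (t ∩ s) = 0 :=
    le_antisymm ((m.mono Set.inter_subset_right).trans h.le) zero_le
  rw [h1, zero_add]
  exact m.mono Set.diff_subset

lemma exists_stieltjes_cover {h : ℝ → ℝ} {X : Set ℝ} {b : ENNReal}
    (hb : stieltjesOuter h X < b) :
    ∃ f : ℕ → Set ℝ, X ⊆ (⋃ i, f i) ∧
      ∑' i, (⨅ (p : ℝ × ℝ) (_ : f i = Set.Ico p.1 p.2),
        ENNReal.ofReal (h p.2 - h p.1)) < b := by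
  unfold stieltjesOuter at hb
  rw [MeasureTheory.OuterMeasure.ofFunction_apply] at hb
  obtain ⟨f, hf⟩ := iInf_lt_iff.1 hb
  obtain ⟨hcov, hsum⟩ := iInf_lt_iff.1 hf
  exact ⟨f, hcov, hsum⟩

end StieltjesAux

/-- every `μ_g`-measurable set is `μ_{g^C}`-measurable: `M_g ⊆ M_{g^C}`. -/
theorem stmt1 (g : ℝ → ℝ) (hmono : Monotone g)
    (hlc : ∀ x : ℝ, ContinuousWithinAt g (Set.Iic x) x) (a : ℝ) (E : Set ℝ)
    (hE : (stieltjesOuter g).IsCaratheodory E) :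
    (stieltjesOuter (contPart g a)).IsCaratheodory E := by
  classical
  set μ := stieltjesOuter g with hμdef
  set ν := stieltjesOuter (contPart g a) with hνdef
  have hνμ : ∀ s : Set ℝ, ν s ≤ μ s := fun s => stieltjesOuter_contPart_le hmono a s
  have hgC : Monotone (contPart g a) := contPart_mono hmono a
  have key : ∀ X : Set ℝ, μ.IsCaratheodory X → μ X ≠ ⊤ → ν.IsCaratheodory X := by
    intro X hX hXfin
    have cover : ∀ k : ℕ, ∃ G : Set ℝ, X ⊆ G ∧ μ.IsCaratheodory G ∧ ν.IsCaratheodory G ∧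
        μ G ≤ μ X + ((k : ENNReal) + 1)⁻¹ := by
      intro k
      have hb : μ X < μ X + ((k : ENNReal) + 1)⁻¹ :=
        ENNReal.lt_add_right hXfin (by simp)
      have hbne : μ X + ((k : ENNReal) + 1)⁻¹ ≠ ⊤ := by
        apply ENNReal.add_ne_top.2
        refine ⟨hXfin, ?_⟩
        simp [ENNReal.inv_ne_top]
      obtain ⟨f, hcov, hsum⟩ := exists_stieltjes_cover hb
      have hico : ∀ i : ℕ, ∃ p : ℝ × ℝ, f i = Set.Ico p.1 p.2 := by
        intro i
        have hi : (⨅ (p : ℝ × ℝ) (_ : f i = Set.Ico p.1 p.2),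
            ENNReal.ofReal (g p.2 - g p.1)) < ⊤ :=
          (ENNReal.le_tsum i).trans_lt (hsum.trans hbne.lt_top)
        obtain ⟨p, hp⟩ := iInf_lt_iff.1 hi
        obtain ⟨hpe, -⟩ := iInf_lt_iff.1 hp
        exact ⟨p, hpe⟩
      refine ⟨⋃ i, f i, hcov, ?_, ?_, ?_⟩
      · apply μ.isCaratheodory_iUnion
        intro i
        obtain ⟨p, hp⟩ := hico i
        rw [hp]
        exact isCaratheodory_Ico hmono p.1 p.2
      · apply ν.isCaratheodory_iUnion
        intro i
        obtain ⟨p, hp⟩ := hico i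
        rw [hp]
        exact isCaratheodory_Ico hgC p.1 p.2
      · refine (measure_iUnion_le f).trans ?_
        refine (ENNReal.tsum_le_tsum fun i =>
          MeasureTheory.OuterMeasure.ofFunction_le (f i)).trans hsum.le
    choose Gf hG1 hG2 hG3 hG4 using cover
    set G := ⋂ k, Gf k with hGdef
    have hXG : X ⊆ G := Set.subset_iInter hG1
    have hGμ : μ.IsCaratheodory G := by
      have : G = (⋃ k, (Gf k)ᶜ)ᶜ := by
        rw [hGdef, Set.iInter_eq_compl_iUnion_compl]
      rw [this]
      exact μ.isCaratheodory_compl (μ.isCaratheodory_iUnion fun k => μ.isCaratheodory_compl (hG2 k))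
    have hGν : ν.IsCaratheodory G := by
      have : G = (⋃ k, (Gf k)ᶜ)ᶜ := by
        rw [hGdef, Set.iInter_eq_compl_iUnion_compl]
      rw [this]
      exact ν.isCaratheodory_compl (ν.isCaratheodory_iUnion fun k => ν.isCaratheodory_compl (hG3 k))
    have hGXk : ∀ k : ℕ, μ (G \ X) ≤ ((k : ENNReal) + 1)⁻¹ := by
      intro k
      have h1 : μ (G \ X) ≤ μ (Gf k \ X) :=
        μ.mono (Set.diff_subset_diff_left (Set.iInter_subset _ k))
      have h2 : μ (Gf k) = μ X + μ (Gf k \ X) := by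
        have := hX (Gf k)
        rwa [Set.inter_eq_self_of_subset_right (hG1 k)] at this
      have h3 : μ X + μ (Gf k \ X) ≤ μ X + ((k : ENNReal) + 1)⁻¹ := h2 ▸ hG4 k
      exact h1.trans ((ENNReal.add_le_add_iff_left hXfin).1 h3)
    have hnull : μ (G \ X) = 0 := by
      by_contra hne
      obtain ⟨n, hn⟩ := ENNReal.exists_inv_nat_lt hne
      have h1 : ((n : ENNReal) + 1)⁻¹ ≤ ((n : ENNReal))⁻¹ :=
        ENNReal.inv_le_inv' (le_add_of_nonneg_right zero_le_one)
      exact absurd hn (((hGXk n).trans h1).not_gt)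
    have hνnull : ν (G \ X) = 0 :=
      le_antisymm ((hνμ _).trans hnull.le) zero_le
    have hXeq : X = G \ (G \ X) := (Set.diff_diff_cancel_left hXG).symm
    rw [hXeq]
    exact ν.isCaratheodory_diff hGν (isCaratheodory_of_null hνnull)
  have hEeq : E = ⋃ n : ℕ, E ∩ Set.Ico (-(n : ℝ)) (n : ℝ) := by
    ext x
    simp only [Set.mem_iUnion, Set.mem_inter_iff, Set.mem_Ico]
    constructor
    · intro hx
      obtain ⟨n, hn⟩ := exists_nat_gt |x|
      have h1 := abs_lt.1 hn
      exact ⟨n, hx, h1.1.le, h1.2⟩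
    · rintro ⟨n, hx, -⟩
      exact hx
  rw [hEeq]
  apply (stieltjesOuter (contPart g a)).isCaratheodory_iUnion
  intro n
  apply key
  · exact μ.isCaratheodory_inter hE (isCaratheodory_Ico hmono _ _)
  · refine ne_top_of_le_ne_top ?_ (μ.mono Set.inter_subset_right)
    exact ((stieltjesOuter_Ico_le g _ _).trans_lt ENNReal.ofReal_lt_top).ne
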